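/- arXiv:2407.01813 — 2 statements merged into one kernel-verified Lean document; each statement's English description precedes it below -/
import Mathlib

section
/- Let T ∈ C^{d×d} be the cyclic shift (Te_k = e_{k+1 mod d}), M ∈ C^{r×r} the modulation matrix (Me_k = e^{2πik/r} e_k), and X_0 = [I_r; 0] ∈ C^{d×r}. Then the 4dr matrices {i^a T^b X_0 M^{-c} : a ∈ Z/4, b ∈ Z/d, c ∈ Z/r} are pairwise distinct elements of St_C(d,r), and any two distinct elements X, Y satisfy Re Tr(X*Y) ≤ 0, i.e., ||X - Y||_Fro ≥ sqrt(2r). -/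
open Matrix Complex

/-- Cyclic shift matrix: `T eₖ = e_{k+1 mod d}`. -/
def shiftT (d : ℕ) : Matrix (Fin d) (Fin d) ℂ :=
  Matrix.of fun i j => if (i : ℕ) = ((j : ℕ) + 1) % d then 1 else 0

/-- Inverse modulation matrix: `diag(e^{-2πik/r})`, so that `modMinv r ^ c = M^{-c}`. -/
noncomputable def modMinv (r : ℕ) : Matrix (Fin r) (Fin r) ℂ :=
  Matrix.diagonal fun k => Complex.exp (-(2 * Real.pi * Complex.I * k / r))

/-- `X₀ = [I_r ; 0] ∈ ℂ^{d×r}`. -/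
def X₀ (d r : ℕ) : Matrix (Fin d) (Fin r) ℂ :=
  Matrix.of fun i j => if (i : ℕ) = (j : ℕ) then 1 else 0

/-- The frobenius distance. -/
noncomputable def frobDist {d r : ℕ} (X Y : Matrix (Fin d) (Fin r) ℂ) : ℝ :=
  Real.sqrt (∑ i, ∑ j, ‖X i j - Y i j‖ ^ 2)

lemma shiftT_pow_apply (d : ℕ) (hd : 0 < d) (b : ℕ) (i j : Fin d) :
    (shiftT d ^ b) i j = if (i : ℕ) = ((j : ℕ) + b) % d then 1 else 0 := by
  induction b generalizing i j with
  | zero =>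
    simp [Matrix.one_apply, Nat.mod_eq_of_lt j.2, Fin.ext_iff]
  | succ b ih =>
    rw [pow_succ, Matrix.mul_apply]
    have key : ∀ k : Fin d, (shiftT d ^ b) i k * shiftT d k j
        = if k = (⟨((j : ℕ) + 1) % d, Nat.mod_lt _ hd⟩ : Fin d) then
            (if (i : ℕ) = (((j : ℕ) + 1) % d + b) % d then 1 else 0) else 0 := by
      intro k
      rw [ih, shiftT]
      simp only [Matrix.of_apply]
      by_cases hk : (k : ℕ) = ((j : ℕ) + 1) % d
      · have : k = (⟨((j : ℕ) + 1) % d, Nat.mod_lt _ hd⟩ : Fin d) := Fin.ext hk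
        rw [if_pos hk, if_pos this, hk, mul_one]
      · rw [if_neg hk, mul_zero,
          if_neg (fun h => hk (by simpa using congrArg Fin.val h))]
    rw [Finset.sum_congr rfl (fun k _ => key k), Finset.sum_ite_eq' Finset.univ]
    simp only [Finset.mem_univ, if_true]
    congr 2
    rw [Nat.mod_add_mod]
    congr 1
    omega

lemma Yentry (d r : ℕ) (hr : 1 ≤ r) (hdr : r ≤ d) (b c : ℕ) (i : Fin d) (j : Fin r) :
    (shiftT d ^ b * X₀ d r * modMinv r ^ c) i j =
      if (i : ℕ) = ((j : ℕ) + b) % d then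
        Complex.exp (-(2 * Real.pi * Complex.I * j / r)) ^ c else 0 := by
  have hd : 0 < d := lt_of_lt_of_le hr hdr
  rw [modMinv, Matrix.diagonal_pow, Matrix.mul_diagonal, Matrix.mul_apply]
  have key : ∀ k : Fin d, (shiftT d ^ b) i k * X₀ d r k j
      = if k = (⟨(j : ℕ), lt_of_lt_of_le j.2 hdr⟩ : Fin d) then
          (if (i : ℕ) = ((j : ℕ) + b) % d then 1 else 0) else 0 := by
    intro k
    rw [shiftT_pow_apply d hd, X₀]
    simp only [Matrix.of_apply]
    by_cases hk : (k : ℕ) = (j : ℕ)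
    · rw [if_pos hk, if_pos (Fin.ext hk), hk, mul_one]
    · rw [if_neg hk, mul_zero,
        if_neg (fun h => hk (by simpa using congrArg Fin.val h))]
  rw [Finset.sum_congr rfl (fun k _ => key k), Finset.sum_ite_eq' Finset.univ]
  simp [Pi.pow_apply, ite_mul]

lemma mod_cancel (d : ℕ) (j : ℕ) (b b' : Fin d) :
    (j + (b : ℕ)) % d = (j + (b' : ℕ)) % d ↔ b = b' := by
  constructor
  · intro h
    have h2 : (b : ℕ) ≡ (b' : ℕ) [MOD d] := Nat.ModEq.add_left_cancel' j h
    have : (b : ℕ) % d = (b' : ℕ) % d := h2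
    rw [Nat.mod_eq_of_lt b.2, Nat.mod_eq_of_lt b'.2] at this
    exact Fin.ext this
  · rintro rfl; rfl

lemma geom_lem (r : ℕ) (hr : 1 ≤ r) (c c' : Fin r) :
    ∑ k : Fin r, (starRingEnd ℂ) (Complex.exp (-(2 * Real.pi * Complex.I * k / r)) ^ (c : ℕ)) *
      Complex.exp (-(2 * Real.pi * Complex.I * k / r)) ^ (c' : ℕ)
    = if c = c' then (r : ℂ) else 0 := by
  have hr0 : (r : ℂ) ≠ 0 := Nat.cast_ne_zero.2 (by omega)
  set z : ℂ := Complex.exp (2 * Real.pi * Complex.I * ((c : ℂ) - (c' : ℂ)) / r) with hz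
  have hterm : ∀ k : Fin r,
      (starRingEnd ℂ) (Complex.exp (-(2 * Real.pi * Complex.I * k / r)) ^ (c : ℕ)) *
        Complex.exp (-(2 * Real.pi * Complex.I * k / r)) ^ (c' : ℕ) = z ^ (k : ℕ) := by
    intro k
    rw [hz, ← Complex.exp_nat_mul, ← Complex.exp_nat_mul, ← Complex.exp_conj,
      ← Complex.exp_add, ← Complex.exp_nat_mul]
    congr 1
    simp only [_root_.map_mul, map_neg, map_div₀, Complex.conj_I, Complex.conj_ofReal,
      map_natCast, map_ofNat]
    ring
  rw [Finset.sum_congr rfl (fun k _ => hterm k), Fin.sum_univ_eq_sum_range (fun k => z ^ k) r]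
  by_cases hc : c = c'
  · subst hc
    have : z = 1 := by rw [hz]; simp
    simp [this]
  · rw [if_neg hc]
    have hz1 : z ≠ 1 := by
      intro h
      rw [hz, Complex.exp_eq_one_iff] at h
      obtain ⟨n, hn⟩ := h
      have hne : (2 * (Real.pi : ℂ) * Complex.I) ≠ 0 := by
        simp [Real.pi_ne_zero, Complex.I_ne_zero]
      have h2 : (2 * (Real.pi : ℂ) * Complex.I) * ((c : ℂ) - (c' : ℂ))
          = (2 * (Real.pi : ℂ) * Complex.I) * (n * r) := by
        field_simp at hn
        linear_combination (2 * (Real.pi : ℂ) * Complex.I) * hn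
      have h3 : ((c : ℂ) - (c' : ℂ)) = (n : ℂ) * r := mul_left_cancel₀ hne h2
      have h4 : ((c : ℤ) - (c' : ℤ) : ℤ) = n * r := by
        have : (((c : ℤ) - (c' : ℤ) : ℤ) : ℂ) = ((n * r : ℤ) : ℂ) := by push_cast; linear_combination h3
        exact_mod_cast this
      have hdvd : (r : ℤ) ∣ ((c : ℤ) - (c' : ℤ)) := ⟨n, by rw [h4]; ring⟩
      have habs : |((c : ℤ) - (c' : ℤ))| < r := by
        rw [abs_lt]
        have := c.2; have := c'.2
        constructor <;> [omega; omega]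
      have h0 : (c : ℤ) - (c' : ℤ) = 0 := Int.eq_zero_of_abs_lt_dvd hdvd habs
      have h5 : ((c : ℕ) : ℤ) = ((c' : ℕ) : ℤ) := sub_eq_zero.mp h0
      exact hc (Fin.ext (by exact_mod_cast h5))
    rw [geom_sum_eq hz1]
    have hzr : z ^ r = 1 := by
      rw [hz, ← Complex.exp_nat_mul]
      have : (r : ℂ) * (2 * Real.pi * Complex.I * ((c : ℂ) - (c' : ℂ)) / r)
          = ((c : ℤ) - (c' : ℤ) : ℤ) * (2 * Real.pi * Complex.I) := by
        push_cast; field_simp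
      rw [this, Complex.exp_int_mul_two_pi_mul_I]
    rw [hzr]
    simp

lemma trace_lem (d r : ℕ) (hr : 1 ≤ r) (hdr : r ≤ d) (a a' : ℕ) (b b' : Fin d) (c c' : Fin r) :
    Matrix.trace ((Complex.I ^ a • (shiftT d ^ (b : ℕ) * X₀ d r * modMinv r ^ (c : ℕ)))ᴴ *
      (Complex.I ^ a' • (shiftT d ^ (b' : ℕ) * X₀ d r * modMinv r ^ (c' : ℕ))))
    = if b = b' ∧ c = c' then (starRingEnd ℂ) (Complex.I ^ a) * Complex.I ^ a' * r else 0 := by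
  have hd : 0 < d := lt_of_lt_of_le hr hdr
  have hdiag : ∀ k : Fin r,
      ((Complex.I ^ a • (shiftT d ^ (b : ℕ) * X₀ d r * modMinv r ^ (c : ℕ)))ᴴ *
        (Complex.I ^ a' • (shiftT d ^ (b' : ℕ) * X₀ d r * modMinv r ^ (c' : ℕ)))) k k
      = if b = b' then
          ((starRingEnd ℂ) (Complex.I ^ a) * Complex.I ^ a') *
            ((starRingEnd ℂ) (Complex.exp (-(2 * Real.pi * Complex.I * k / r)) ^ (c : ℕ)) *
              Complex.exp (-(2 * Real.pi * Complex.I * k / r)) ^ (c' : ℕ)) else 0 := by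
    intro k
    rw [Matrix.mul_apply]
    have key : ∀ i : Fin d,
        ((Complex.I ^ a • (shiftT d ^ (b : ℕ) * X₀ d r * modMinv r ^ (c : ℕ)))ᴴ) k i *
          ((Complex.I ^ a' • (shiftT d ^ (b' : ℕ) * X₀ d r * modMinv r ^ (c' : ℕ)))) i k
        = if i = (⟨((k : ℕ) + (b : ℕ)) % d, Nat.mod_lt _ hd⟩ : Fin d) then
            (if b = b' then
              ((starRingEnd ℂ) (Complex.I ^ a) * Complex.I ^ a') *
                ((starRingEnd ℂ) (Complex.exp (-(2 * Real.pi * Complex.I * k / r)) ^ (c : ℕ)) *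
                  Complex.exp (-(2 * Real.pi * Complex.I * k / r)) ^ (c' : ℕ)) else 0) else 0 := by
      intro i
      rw [Matrix.conjTranspose_apply, Matrix.smul_apply, Matrix.smul_apply,
        Yentry d r hr hdr, Yentry d r hr hdr]
      by_cases h1 : (i : ℕ) = ((k : ℕ) + (b : ℕ)) % d
      · rw [if_pos h1, if_pos (Fin.ext h1)]
        by_cases h2 : b = b'
        · subst h2
          rw [if_pos h1, if_pos rfl]
          simp only [smul_eq_mul, starRingEnd_apply, star_mul']
          ring
        · rw [if_neg (fun h => h2 ((mod_cancel d (k : ℕ) b b').1 (h1 ▸ h))), if_neg h2]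
          simp
      · have hfin : i ≠ (⟨((k : ℕ) + (b : ℕ)) % d, Nat.mod_lt _ hd⟩ : Fin d) :=
          fun h => h1 (by simpa using congrArg Fin.val h)
        rw [if_neg h1, if_neg hfin]
        simp
    rw [Finset.sum_congr rfl (fun i _ => key i), Finset.sum_ite_eq' Finset.univ]
    simp
  rw [Matrix.trace]
  simp only [Matrix.diag_apply]
  rw [Finset.sum_congr rfl (fun k _ => hdiag k)]
  by_cases h2 : b = b'
  · simp only [if_pos h2, ← Finset.mul_sum]
    rw [geom_lem r hr c c']
    by_cases h3 : c = c'
    · rw [if_pos h3, if_pos ⟨h2, h3⟩]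
      try ring
    · rw [if_neg h3, if_neg (fun h => h3 h.2), mul_zero]
  · simp [h2]

lemma mod_cancel' (d b k l : ℕ) (hk : k < d) (hl : l < d) :
    (k + b) % d = (l + b) % d ↔ k = l := by
  constructor
  · intro h
    have h2 : k ≡ l [MOD d] := Nat.ModEq.add_right_cancel' b h
    have h3 : k % d = l % d := h2
    rwa [Nat.mod_eq_of_lt hk, Nat.mod_eq_of_lt hl] at h3
  · rintro rfl; rfl

lemma unit_lem (d r : ℕ) (hr : 1 ≤ r) (hdr : r ≤ d) (a : ℕ) (b : Fin d) (c : Fin r) :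
    (Complex.I ^ a • (shiftT d ^ (b : ℕ) * X₀ d r * modMinv r ^ (c : ℕ)))ᴴ *
      (Complex.I ^ a • (shiftT d ^ (b : ℕ) * X₀ d r * modMinv r ^ (c : ℕ))) = 1 := by
  have hd : 0 < d := lt_of_lt_of_le hr hdr
  ext k l
  rw [Matrix.mul_apply]
  have key : ∀ i : Fin d,
      ((Complex.I ^ a • (shiftT d ^ (b : ℕ) * X₀ d r * modMinv r ^ (c : ℕ)))ᴴ) k i *
        ((Complex.I ^ a • (shiftT d ^ (b : ℕ) * X₀ d r * modMinv r ^ (c : ℕ)))) i l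
      = if i = (⟨((k : ℕ) + (b : ℕ)) % d, Nat.mod_lt _ hd⟩ : Fin d) then
          (if k = l then 1 else 0) else 0 := by
    intro i
    rw [Matrix.conjTranspose_apply, Matrix.smul_apply, Matrix.smul_apply,
      Yentry d r hr hdr, Yentry d r hr hdr]
    by_cases h1 : (i : ℕ) = ((k : ℕ) + (b : ℕ)) % d
    · rw [if_pos h1, if_pos (Fin.ext h1)]
      by_cases h2 : k = l
      · subst h2
        rw [if_pos h1, if_pos rfl]
        simp only [smul_eq_mul]
        have hI : (starRingEnd ℂ) Complex.I * Complex.I = 1 := by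
          simp [Complex.conj_I]
        have hE : (starRingEnd ℂ) (Complex.exp (-(2 * Real.pi * Complex.I * k / r))) *
            Complex.exp (-(2 * Real.pi * Complex.I * k / r)) = 1 := by
          rw [← Complex.exp_conj, ← Complex.exp_add,
            show (starRingEnd ℂ) (-(2 * (Real.pi : ℂ) * Complex.I * k / r)) +
              (-(2 * (Real.pi : ℂ) * Complex.I * k / r)) = 0 from by
                simp only [map_neg, map_div₀, _root_.map_mul, Complex.conj_I,
                  Complex.conj_ofReal, map_ofNat, map_natCast]
                ring]
          exact Complex.exp_zero
        calc (starRingEnd ℂ) (Complex.I ^ a * Complex.exp (-(2 * Real.pi * Complex.I * k / r)) ^ (c : ℕ)) *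
              (Complex.I ^ a * Complex.exp (-(2 * Real.pi * Complex.I * k / r)) ^ (c : ℕ))
            = ((starRingEnd ℂ) Complex.I * Complex.I) ^ a *
              ((starRingEnd ℂ) (Complex.exp (-(2 * Real.pi * Complex.I * k / r))) *
                Complex.exp (-(2 * Real.pi * Complex.I * k / r))) ^ (c : ℕ) := by
              rw [_root_.map_mul, map_pow, map_pow, mul_pow, mul_pow]; ring
          _ = 1 := by rw [hI, hE, one_pow, one_pow, one_mul]
      · have hne : ¬ (i : ℕ) = ((l : ℕ) + (b : ℕ)) % d := by
          rw [h1]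
          intro h
          exact h2 (Fin.ext ((mod_cancel' d (b : ℕ) k l (lt_of_lt_of_le k.2 hdr)
            (lt_of_lt_of_le l.2 hdr)).1 h))
        rw [if_neg hne, if_neg h2]
        simp
    · have hfin : i ≠ (⟨((k : ℕ) + (b : ℕ)) % d, Nat.mod_lt _ hd⟩ : Fin d) :=
        fun h => h1 (by simpa using congrArg Fin.val h)
      rw [if_neg h1, if_neg hfin]
      simp
  rw [Finset.sum_congr rfl (fun i _ => key i), Finset.sum_ite_eq' Finset.univ,
    Matrix.one_apply]
  simp

lemma re_trace_eq (d r : ℕ) (A B : Matrix (Fin d) (Fin r) ℂ) :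
    RCLike.re (Matrix.trace (Aᴴ * B))
      = ∑ i : Fin d, ∑ j : Fin r, ((starRingEnd ℂ) (A i j) * B i j).re := by
  rw [Matrix.trace]
  simp only [Matrix.diag_apply, Matrix.mul_apply, Matrix.conjTranspose_apply,
    RCLike.re_to_complex]
  rw [Complex.re_sum]
  simp only [Complex.re_sum]
  rw [Finset.sum_comm]
  rfl

lemma frob_lem (d r : ℕ) (X Z : Matrix (Fin d) (Fin r) ℂ)
    (hX : Xᴴ * X = 1) (hZ : Zᴴ * Z = 1)
    (h : RCLike.re (Matrix.trace (Xᴴ * Z)) ≤ 0) :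
    Real.sqrt (2 * r) ≤ frobDist X Z := by
  rw [frobDist]
  apply Real.sqrt_le_sqrt
  have expand : ∀ (i : Fin d) (j : Fin r), ‖X i j - Z i j‖ ^ 2
      = ((starRingEnd ℂ) (X i j) * X i j).re + ((starRingEnd ℂ) (Z i j) * Z i j).re
        - 2 * ((starRingEnd ℂ) (X i j) * Z i j).re := by
    intro i j
    rw [Complex.sq_norm, Complex.normSq_sub]
    have h1 : ∀ z : ℂ, ((starRingEnd ℂ) z * z).re = Complex.normSq z := by
      intro z
      rw [mul_comm, Complex.mul_conj]
      simp
    rw [h1, h1]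
    have h2 : (X i j * (starRingEnd ℂ) (Z i j)).re = ((starRingEnd ℂ) (X i j) * Z i j).re := by
      have := Complex.conj_re ((starRingEnd ℂ) (X i j) * Z i j)
      rw [_root_.map_mul, Complex.conj_conj] at this
      rw [← this, mul_comm]
    rw [h2]
    try ring
  calc (2 : ℝ) * r = (r : ℝ) + r - 2 * 0 := by ring
    _ ≤ RCLike.re (Matrix.trace (Xᴴ * X)) + RCLike.re (Matrix.trace (Zᴴ * Z))
        - 2 * RCLike.re (Matrix.trace (Xᴴ * Z)) := by
        rw [hX, hZ, Matrix.trace_one]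
        simp only [RCLike.re_to_complex]
        have h4 : ((Fintype.card (Fin r) : ℂ)).re = r := by simp
        rw [h4]
        simp only [RCLike.re_to_complex] at h
        linarith
    _ = ∑ i : Fin d, ∑ j : Fin r, ‖X i j - Z i j‖ ^ 2 := by
        rw [re_trace_eq, re_trace_eq, re_trace_eq]
        simp only [expand, Finset.sum_sub_distrib, Finset.sum_add_distrib, Finset.mul_sum]

lemma re_pow_I (r : ℕ) (a a' : Fin 4) (ha : a ≠ a') :
    ((starRingEnd ℂ) (Complex.I ^ (a : ℕ)) * Complex.I ^ (a' : ℕ) * (r : ℂ)).re ≤ 0 := by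
  fin_cases a <;> fin_cases a' <;>
    simp_all [pow_succ, Complex.conj_I, Complex.mul_re, Complex.mul_im]

theorem complex_stiefel_orthoplex_construction (d r : ℕ) (hr : 1 ≤ r) (hdr : r ≤ d)
    (Y : Fin 4 × Fin d × Fin r → Matrix (Fin d) (Fin r) ℂ)
    (hY : ∀ p : Fin 4 × Fin d × Fin r,
      Y p = (Complex.I ^ (p.1 : ℕ)) •
        (shiftT d ^ (p.2.1 : ℕ) * X₀ d r * modMinv r ^ (p.2.2 : ℕ))) :
    Function.Injective Y ∧
    (∀ p, (Y p)ᴴ * Y p = 1) ∧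
    (∀ p q, p ≠ q →
      RCLike.re (Matrix.trace ((Y p)ᴴ * Y q)) ≤ 0 ∧
      Real.sqrt (2 * r) ≤ frobDist (Y p) (Y q)) := by
  have part2 : ∀ p, (Y p)ᴴ * Y p = 1 := by
    intro p
    rw [hY p]
    exact unit_lem d r hr hdr _ _ _
  have htr : ∀ p q : Fin 4 × Fin d × Fin r, Matrix.trace ((Y p)ᴴ * Y q)
      = if p.2.1 = q.2.1 ∧ p.2.2 = q.2.2 then
          (starRingEnd ℂ) (Complex.I ^ ((p.1 : ℕ))) * Complex.I ^ ((q.1 : ℕ)) * r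
        else 0 := by
    intro p q
    rw [hY p, hY q]
    exact trace_lem d r hr hdr _ _ _ _ _ _
  have part3a : ∀ p q, p ≠ q → RCLike.re (Matrix.trace ((Y p)ᴴ * Y q)) ≤ 0 := by
    intro p q hpq
    rw [htr p q]
    by_cases h : p.2.1 = q.2.1 ∧ p.2.2 = q.2.2
    · rw [if_pos h]
      have ha : p.1 ≠ q.1 := by
        intro h1
        exact hpq (Prod.ext_iff.2 ⟨h1, Prod.ext_iff.2 ⟨h.1, h.2⟩⟩)
      simp only [RCLike.re_to_complex]
      exact re_pow_I r p.1 q.1 ha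
    · rw [if_neg h]
      simp
  refine ⟨?_, part2, fun p q hpq => ⟨part3a p q hpq,
    frob_lem d r (Y p) (Y q) (part2 p) (part2 q) (part3a p q hpq)⟩⟩
  intro p q hpq
  by_contra hne
  have h1 := part3a p q hne
  rw [hpq, part2 q, Matrix.trace_one] at h1
  simp only [RCLike.re_to_complex, Complex.natCast_re] at h1
  have h2 : (0 : ℝ) < (Fintype.card (Fin r) : ℝ) := by
    simp only [Fintype.card_fin]
    exact_mod_cast lt_of_lt_of_le zero_lt_one hr
  simp at h1
  linarith
end

section
/- For every d ≥ r ≥ 1 and every n with 2dr + 1 < n ≤ 4dr, there exists a complex (d,r,n)-Stiefel orthoplex code: n matrices in St_C(d,r) with all pairwise Frobenius distances at least sqrt(2r). -/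
open Matrix

noncomputable def ww (r : ℕ) : ℂ := Complex.exp (2 * Real.pi * Complex.I / r)

lemma ww_prim {r : ℕ} (hr : 0 < r) : IsPrimitiveRoot (ww r) r :=
  Complex.isPrimitiveRoot_exp r hr.ne'

lemma abs_ww {r : ℕ} (hr : 0 < r) : ‖ww r‖ = 1 := by
  have : (2 * Real.pi * Complex.I / r) = ((2 * Real.pi / r : ℝ) : ℂ) * Complex.I := by
    push_cast; ring
  rw [ww, this, Complex.norm_exp_ofReal_mul_I]

lemma sum_pow_ww {r : ℕ} (hr : 0 < r) {m : ℕ} (hm : ¬ (r ∣ m)) :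
    ∑ j : Fin r, ww r ^ (m * (j : ℕ)) = 0 := by
  have hx : ww r ^ m ≠ 1 := fun h => hm (((ww_prim hr).pow_eq_one_iff_dvd m).mp h)
  have h1 : (ww r ^ m) ^ r = 1 := by
    rw [← pow_mul, mul_comm, pow_mul, (ww_prim hr).pow_eq_one, one_pow]
  calc ∑ j : Fin r, ww r ^ (m * (j : ℕ)) = ∑ j : Fin r, (ww r ^ m) ^ (j : ℕ) := by
        exact Finset.sum_congr rfl (by intro j _; rw [pow_mul])
    _ = ∑ j ∈ Finset.range r, (ww r ^ m) ^ j := Fin.sum_univ_eq_sum_range _ r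
    _ = ((ww r ^ m) ^ r - 1) / (ww r ^ m - 1) := geom_sum_eq hx r
    _ = 0 := by rw [h1, sub_self, zero_div]

noncomputable def stX (d r : ℕ) (k : ℕ) : Matrix (Fin d) (Fin r) ℂ := fun i j =>
  if (i : ℕ) = ((j : ℕ) + (k / r) % d) % d
  then Complex.I ^ (k / (d * r)) * ww r ^ ((k % r) * (j : ℕ)) else 0

lemma stX_col {d r : ℕ} (hd : 0 < d) (k k' : ℕ) (j j' : Fin r) :
    ∑ i : Fin d, (starRingEnd ℂ) (stX d r k i j) * stX d r k' i j' =
    if ((j : ℕ) + (k / r) % d) % d = ((j' : ℕ) + (k' / r) % d) % d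
    then (starRingEnd ℂ) (Complex.I ^ (k / (d * r)) * ww r ^ ((k % r) * (j : ℕ))) *
         (Complex.I ^ (k' / (d * r)) * ww r ^ ((k' % r) * (j' : ℕ))) else 0 := by
  have hAd : ((j : ℕ) + (k / r) % d) % d < d := Nat.mod_lt _ hd
  rw [Finset.sum_eq_single (⟨((j : ℕ) + (k / r) % d) % d, hAd⟩ : Fin d)]
  · have c1 : stX d r k ⟨((j : ℕ) + (k / r) % d) % d, hAd⟩ j =
        Complex.I ^ (k / (d * r)) * ww r ^ ((k % r) * (j : ℕ)) := if_pos rfl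
    have c2 : stX d r k' ⟨((j : ℕ) + (k / r) % d) % d, hAd⟩ j' =
        if ((j : ℕ) + (k / r) % d) % d = ((j' : ℕ) + (k' / r) % d) % d
        then Complex.I ^ (k' / (d * r)) * ww r ^ ((k' % r) * (j' : ℕ)) else 0 := rfl
    rw [c1, c2]
    by_cases h : ((j : ℕ) + (k / r) % d) % d = ((j' : ℕ) + (k' / r) % d) % d
    · rw [if_pos h, if_pos h]
    · rw [if_neg h, if_neg h, mul_zero]
  · intro b _ hb
    have hbA : (b : ℕ) ≠ ((j : ℕ) + (k / r) % d) % d := fun h => hb (Fin.ext h)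
    have : stX d r k b j = 0 := if_neg hbA
    rw [this, map_zero, zero_mul]
  · simp

lemma stX_overlap {d r : ℕ} (hd : 0 < d) (hr : 0 < r) (hrd : r ≤ d) (k k' : ℕ) :
    ∑ j : Fin r, ∑ i : Fin d, (starRingEnd ℂ) (stX d r k i j) * stX d r k' i j =
    if (k / r) % d = (k' / r) % d ∧ k % r = k' % r
    then (r : ℂ) * ((starRingEnd ℂ) (Complex.I ^ (k / (d * r))) * Complex.I ^ (k' / (d * r)))
    else 0 := by
  by_cases ha : (k / r) % d = (k' / r) % d
  · by_cases hb : k % r = k' % r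
    · rw [if_pos ⟨ha, hb⟩]
      have key : ∀ j : Fin r, ∑ i : Fin d, (starRingEnd ℂ) (stX d r k i j) * stX d r k' i j =
          (starRingEnd ℂ) (Complex.I ^ (k / (d * r))) * Complex.I ^ (k' / (d * r)) := by
        intro j
        rw [stX_col hd, if_pos (by rw [ha]), _root_.map_mul]
        have hz : (starRingEnd ℂ) (ww r ^ (k % r * (j : ℕ))) * ww r ^ (k' % r * (j : ℕ)) = 1 := by
          rw [hb, mul_comm, Complex.mul_conj, ← Complex.sq_norm, norm_pow, abs_ww hr, one_pow]
          norm_num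
        calc (starRingEnd ℂ) (Complex.I ^ (k / (d * r))) * (starRingEnd ℂ) (ww r ^ (k % r * (j:ℕ))) *
              (Complex.I ^ (k' / (d * r)) * ww r ^ (k' % r * (j:ℕ)))
            = (starRingEnd ℂ) (Complex.I ^ (k / (d * r))) * Complex.I ^ (k' / (d * r)) *
              ((starRingEnd ℂ) (ww r ^ (k % r * (j:ℕ))) * ww r ^ (k' % r * (j:ℕ))) := by ring
          _ = _ := by rw [hz, mul_one]
      rw [Finset.sum_congr rfl (fun j _ => key j), Finset.sum_const, Finset.card_univ,
        Fintype.card_fin, nsmul_eq_mul]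
    · rw [if_neg (by tauto)]
      have hbr : k % r < r := Nat.mod_lt _ hr
      have hb' : k' % r < r := Nat.mod_lt _ hr
      have hconj : ∀ j : Fin r, (starRingEnd ℂ) (ww r ^ (k % r * (j : ℕ))) =
          ww r ^ ((r - k % r) * (j : ℕ)) := by
        intro j
        have h1 : ww r ^ ((r - k % r) * (j : ℕ)) * ww r ^ (k % r * (j : ℕ)) = 1 := by
          rw [← pow_add, ← add_mul, Nat.sub_add_cancel hbr.le, pow_mul,
            (ww_prim hr).pow_eq_one, one_pow]
        have h2 : (ww r ^ (k % r * (j : ℕ)))⁻¹ = (starRingEnd ℂ) (ww r ^ (k % r * (j : ℕ))) := by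
          apply Complex.inv_eq_conj
          rw [norm_pow, abs_ww hr, one_pow]
        rw [← h2]
        exact (eq_inv_of_mul_eq_one_left h1).symm
      have key : ∀ j : Fin r, ∑ i : Fin d, (starRingEnd ℂ) (stX d r k i j) * stX d r k' i j =
          ((starRingEnd ℂ) (Complex.I ^ (k / (d * r))) * Complex.I ^ (k' / (d * r))) *
            ww r ^ (((r - k % r) + k' % r) * (j : ℕ)) := by
        intro j
        rw [stX_col hd, if_pos (by rw [ha]), _root_.map_mul, hconj j, add_mul, pow_add]
        ring
      rw [Finset.sum_congr rfl (fun j _ => key j), ← Finset.mul_sum, sum_pow_ww hr, mul_zero]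
      rintro ⟨c, hc⟩
      have hc1 : c = 1 := by
        rcases c with _ | _ | c
        · omega
        · rfl
        · exfalso
          have : 2 * r ≤ r * (c + 1 + 1) := by nlinarith
          omega
      subst hc1
      omega
  · rw [if_neg (by tauto)]
    apply Finset.sum_eq_zero
    intro j _
    rw [stX_col hd, if_neg]
    intro h
    have h1 : (k / r) % d < d := Nat.mod_lt _ hd
    have h2 : (k' / r) % d < d := Nat.mod_lt _ hd
    have hm : (j : ℕ) + (k / r) % d ≡ (j : ℕ) + (k' / r) % d [MOD d] := h
    have := Nat.ModEq.add_left_cancel' _ hm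
    rw [Nat.ModEq, Nat.mod_eq_of_lt h1, Nat.mod_eq_of_lt h2] at this
    exact ha this

lemma reI {s s' : ℕ} (h4 : s < 4) (h4' : s' < 4) (hne : s ≠ s') :
    ((starRingEnd ℂ) (Complex.I ^ s) * Complex.I ^ s').re ≤ 0 := by
  interval_cases s <;> interval_cases s' <;>
    simp_all [pow_succ, Complex.conj_I, Complex.mul_re, Complex.mul_im]

lemma stX_unitary {d r : ℕ} (hd : 0 < d) (hr : 0 < r) (hrd : r ≤ d) (k : ℕ) :
    (stX d r k)ᴴ * stX d r k = 1 := by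
  ext j j'
  rw [Matrix.mul_apply]
  have e : ∀ i : Fin d, (stX d r k)ᴴ j i * stX d r k i j' =
      (starRingEnd ℂ) (stX d r k i j) * stX d r k i j' := fun i => rfl
  rw [Finset.sum_congr rfl (fun i _ => e i), stX_col hd]
  by_cases hjj : j = j'
  · subst hjj
    rw [if_pos rfl, Matrix.one_apply_eq, mul_comm, Complex.mul_conj, ← Complex.sq_norm,
      norm_mul, norm_pow, norm_pow, Complex.norm_I, abs_ww hr, one_pow, one_pow,
      one_mul, one_pow]
    norm_num
  · rw [if_neg ?_, Matrix.one_apply_ne hjj]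
    intro h
    apply hjj
    have hm : (j : ℕ) + (k / r) % d ≡ (j' : ℕ) + (k / r) % d [MOD d] := h
    have := Nat.ModEq.add_right_cancel' _ hm
    rw [Nat.ModEq, Nat.mod_eq_of_lt (lt_of_lt_of_le j.2 hrd),
      Nat.mod_eq_of_lt (lt_of_lt_of_le j'.2 hrd)] at this
    exact Fin.ext this

lemma stX_diag {d r : ℕ} (hd : 0 < d) (hr : 0 < r) (hrd : r ≤ d) (k : ℕ) :
    (∑ j : Fin r, ∑ i : Fin d, (starRingEnd ℂ) (stX d r k i j) * stX d r k i j).re = r := by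
  rw [stX_overlap hd hr hrd, if_pos ⟨rfl, rfl⟩]
  have h1 : (starRingEnd ℂ) (Complex.I ^ (k / (d * r))) * Complex.I ^ (k / (d * r)) = 1 := by
    rw [mul_comm, Complex.mul_conj, ← Complex.sq_norm, norm_pow, Complex.norm_I, one_pow]
    norm_num
  rw [h1, mul_one]
  simp

lemma stX_re_nonpos {d r : ℕ} (hd : 0 < d) (hr : 0 < r) (hrd : r ≤ d)
    {k k' : ℕ} (hk : k < 4 * d * r) (hk' : k' < 4 * d * r) (hne : k ≠ k') :
    (∑ j : Fin r, ∑ i : Fin d, (starRingEnd ℂ) (stX d r k i j) * stX d r k' i j).re ≤ 0 := by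
  rw [stX_overlap hd hr hrd]
  split_ifs with h
  · obtain ⟨ha, hb⟩ := h
    have hs : k / (d * r) ≠ k' / (d * r) := by
      intro hs
      apply hne
      have e1 : k / r = k' / r := by
        have t1 : k / r / d = k' / r / d := by
          rw [Nat.div_div_eq_div_mul, Nat.div_div_eq_div_mul, mul_comm r d]
          exact hs
        calc k / r = d * (k / r / d) + (k / r) % d := (Nat.div_add_mod _ d).symm
          _ = d * (k' / r / d) + (k' / r) % d := by rw [t1, ha]
          _ = k' / r := Nat.div_add_mod _ d
      calc k = r * (k / r) + k % r := (Nat.div_add_mod _ r).symm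
        _ = r * (k' / r) + k' % r := by rw [e1, hb]
        _ = k' := Nat.div_add_mod _ r
    have hmm : 4 * d * r = d * r * 4 := by ring
    have h4 : k / (d * r) < 4 := Nat.div_lt_of_lt_mul (hmm ▸ hk)
    have h4' : k' / (d * r) < 4 := Nat.div_lt_of_lt_mul (hmm ▸ hk')
    have hz := reI h4 h4' hs
    rw [Complex.mul_re]
    simp only [Complex.natCast_re, Complex.natCast_im, zero_mul, sub_zero]
    have : (0:ℝ) ≤ r := Nat.cast_nonneg r
    nlinarith
  · simp

lemma norm_sub_sq' (z w : ℂ) : (‖z - w‖ ^ 2 : ℝ) =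
    ((starRingEnd ℂ) z * z).re + ((starRingEnd ℂ) w * w).re -
      2 * ((starRingEnd ℂ) z * w).re := by
  rw [Complex.sq_norm, Complex.normSq_sub]
  have e1 : ((starRingEnd ℂ) z * z).re = Complex.normSq z := by
    rw [mul_comm, Complex.mul_conj, Complex.ofReal_re]
  have e2 : ((starRingEnd ℂ) w * w).re = Complex.normSq w := by
    rw [mul_comm, Complex.mul_conj, Complex.ofReal_re]
  have e3 : (z * (starRingEnd ℂ) w).re = ((starRingEnd ℂ) z * w).re := by
    have : z * (starRingEnd ℂ) w = (starRingEnd ℂ) ((starRingEnd ℂ) z * w) := by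
      rw [map_mul (starRingEnd ℂ), Complex.conj_conj]
    rw [this, Complex.conj_re]
  rw [e1, e2, e3]

lemma stX_dist_sq {d r : ℕ} (hd : 0 < d) (hr : 0 < r) (hrd : r ≤ d)
    {k k' : ℕ} (hk : k < 4 * d * r) (hk' : k' < 4 * d * r) (hne : k ≠ k') :
    2 * (r : ℝ) ≤ ∑ i : Fin d, ∑ j : Fin r, ‖stX d r k i j - stX d r k' i j‖ ^ 2 := by
  have expand : (∑ i : Fin d, ∑ j : Fin r, ‖stX d r k i j - stX d r k' i j‖ ^ 2) =
      (∑ j : Fin r, ∑ i : Fin d, (starRingEnd ℂ) (stX d r k i j) * stX d r k i j).re +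
      (∑ j : Fin r, ∑ i : Fin d, (starRingEnd ℂ) (stX d r k' i j) * stX d r k' i j).re -
      2 * (∑ j : Fin r, ∑ i : Fin d, (starRingEnd ℂ) (stX d r k i j) * stX d r k' i j).re := by
    rw [Finset.sum_comm]
    simp only [Complex.re_sum, Finset.mul_sum, ← Finset.sum_add_distrib,
      ← Finset.sum_sub_distrib]
    exact Finset.sum_congr rfl fun j _ => Finset.sum_congr rfl fun i _ => norm_sub_sq' _ _
  rw [expand, stX_diag hd hr hrd, stX_diag hd hr hrd]
  have := stX_re_nonpos hd hr hrd hk hk' hne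
  linarith

theorem exists_complex_stiefel_orthoplex_code (d r n : ℕ)
    (hr : 1 ≤ r) (hdr : r ≤ d) (hn₁ : 2 * d * r + 1 < n) (hn₂ : n ≤ 4 * d * r) :
    ∃ X : Fin n → Matrix (Fin d) (Fin r) ℂ,
      (∀ i, (X i)ᴴ * X i = 1) ∧
      (∀ i j : Fin n, i ≠ j → Real.sqrt (2 * r) ≤ frobDist (X i) (X j)) := by
  have hd : 0 < d := lt_of_lt_of_le hr hdr
  refine ⟨fun i => stX d r i.val, fun i => stX_unitary hd hr hdr _, fun i j hij => ?_⟩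
  have hki : (i : ℕ) < 4 * d * r := lt_of_lt_of_le i.2 hn₂
  have hkj : (j : ℕ) < 4 * d * r := lt_of_lt_of_le j.2 hn₂
  have hne : (i : ℕ) ≠ (j : ℕ) := fun h => hij (Fin.ext h)
  rw [frobDist]
  apply Real.sqrt_le_sqrt
  exact_mod_cast stX_dist_sq hd hr hdr hki hkj hne
end
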